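/- Let N ≥ 1, let A be a nonempty bounded subset of ℝ^N and let δ > 0. Then for every s ∈ ℂ with Re s > dim̄_B A, the integral ∫_0^δ t^{s−N−1} |A_t| dt converges absolutely, and the following functional equation holds: ∫_{A_δ} d(x,A)^{s−N} dx = δ^{s−N} |A_δ| + (N − s) ∫_0^δ t^{s−N−1} |A_t| dt. -/

import Mathlib

open MeasureTheory Metric Filter Set
open scoped ENNReal Topology

/-- The upper `r`-dimensional Minkowski content of a subset of `ℝ^N`. -/
noncomputable def upperMink (N : ℕ) (A : Set (EuclideanSpace ℝ (Fin N))) (r : ℝ) : ℝ≥0∞ :=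
  Filter.limsup (fun t : ℝ => volume (thickening t A) / ENNReal.ofReal (t ^ ((N : ℝ) - r)))
    (𝓝[>] (0 : ℝ))

/-- The upper box (Minkowski) dimension of a subset of `ℝ^N`. -/
noncomputable def upperBoxDim (N : ℕ) (A : Set (EuclideanSpace ℝ (Fin N))) : ℝ :=
  sInf {r : ℝ | 0 < r ∧ upperMink N A r = 0}

section helpers

variable {N : ℕ} {A : Set (EuclideanSpace ℝ (Fin N))}

lemma volThick_mono : Monotone (fun t : ℝ => volume (thickening t A)) :=
  fun _ _ hab => measure_mono (thickening_mono hab A)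

lemma volThick_meas : Measurable (fun t : ℝ => (volume (thickening t A)).toReal) :=
  (volThick_mono.measurable).ennreal_toReal

lemma upperMink_top (hb : Bornology.IsBounded A) : upperMink N A ((N : ℝ) + 1) = 0 := by
  have hV : volume (thickening (1:ℝ) A) ≠ ∞ := hb.thickening.measure_lt_top.ne
  have key : ∀ᶠ t in 𝓝[>] (0:ℝ),
      volume (thickening t A) / ENNReal.ofReal (t ^ ((N : ℝ) - ((N:ℝ)+1))) ≤
        volume (thickening (1:ℝ) A) * ENNReal.ofReal t := by
    filter_upwards [Ioo_mem_nhdsGT_of_mem (by norm_num : (0:ℝ) ∈ Ico (0:ℝ) 1)] with t ht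
    have ht0 : (0:ℝ) < t := ht.1
    have : (N : ℝ) - ((N:ℝ)+1) = -1 := by ring
    rw [this, Real.rpow_neg_one, ENNReal.ofReal_inv_of_pos ht0, div_eq_mul_inv, inv_inv]
    exact mul_le_mul' (measure_mono (thickening_mono ht.2.le A)) le_rfl
  have h2 : Tendsto (fun t : ℝ => volume (thickening (1:ℝ) A) * ENNReal.ofReal t)
      (𝓝[>] (0:ℝ)) (𝓝 0) := by
    have : Tendsto (fun t : ℝ => ENNReal.ofReal t) (𝓝[>] (0:ℝ)) (𝓝 0) := by
      have h0 : Tendsto (fun t : ℝ => ENNReal.ofReal t) (𝓝 (0:ℝ)) (𝓝 0) := by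
        simpa using ENNReal.continuous_ofReal.tendsto 0
      exact h0.mono_left nhdsWithin_le_nhds
    simpa using ENNReal.Tendsto.const_mul this (Or.inr hV)
  refine le_antisymm ?_ zero_le
  calc upperMink N A ((N:ℝ)+1) ≤
      limsup (fun t : ℝ => volume (thickening (1:ℝ) A) * ENNReal.ofReal t) (𝓝[>] (0:ℝ)) :=
        limsup_le_limsup key
    _ = 0 := h2.limsup_eq

lemma exists_good_r (hb : Bornology.IsBounded A) {σ : ℝ} (hσ : upperBoxDim N A < σ) :
    ∃ r : ℝ, 0 < r ∧ r < σ ∧ upperMink N A r = 0 := by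
  have hne : {r : ℝ | 0 < r ∧ upperMink N A r = 0}.Nonempty :=
    ⟨(N:ℝ)+1, by positivity, upperMink_top hb⟩
  have hbd : BddBelow {r : ℝ | 0 < r ∧ upperMink N A r = 0} :=
    ⟨0, fun r hr => hr.1.le⟩
  obtain ⟨r, hr, hrσ⟩ := (csInf_lt_iff hbd hne).mp hσ
  exact ⟨r, hr.1, hrσ, hr.2⟩

lemma eventual_bound {r : ℝ} (h : upperMink N A r = 0) :
    ∃ ε > 0, ∀ t ∈ Ioo (0:ℝ) ε,
      volume (thickening t A) ≤ ENNReal.ofReal (t ^ ((N : ℝ) - r)) := by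
  unfold upperMink at h
  have h1 : ∀ᶠ t in 𝓝[>] (0:ℝ),
      volume (thickening t A) / ENNReal.ofReal (t ^ ((N : ℝ) - r)) < 1 :=
    eventually_lt_of_limsup_lt (by rw [h]; exact zero_lt_one)
  obtain ⟨u, hu, hsub⟩ := mem_nhdsGT_iff_exists_Ioo_subset.mp h1
  refine ⟨u, hu, fun t ht => ?_⟩
  have hP : volume (thickening t A) / ENNReal.ofReal (t ^ ((N : ℝ) - r)) < 1 := hsub ht
  have hpos : (0:ℝ) < t ^ ((N : ℝ) - r) := Real.rpow_pos_of_pos ht.1 _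
  have hne0 : ENNReal.ofReal (t ^ ((N : ℝ) - r)) ≠ 0 := by
    simp [ENNReal.ofReal_eq_zero, not_le, hpos]
  have := (ENNReal.div_le_iff hne0 ENNReal.ofReal_ne_top).mp hP.le
  simpa using this


lemma integrableOn_G (hb : Bornology.IsBounded A) {σ r ε δ : ℝ} (hδ : 0 < δ) (hε : 0 < ε)
    (hrσ : r < σ)
    (hbound : ∀ t ∈ Ioo (0:ℝ) ε, volume (thickening t A) ≤ ENNReal.ofReal (t ^ ((N : ℝ) - r))) :
    IntegrableOn (fun t : ℝ => t ^ (σ - N - 1) * (volume (thickening t A)).toReal)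
      (Ioc 0 δ) volume := by
  set G := fun t : ℝ => t ^ (σ - N - 1) * (volume (thickening t A)).toReal with hG
  set m := min (ε/2) δ with hm
  have hm0 : 0 < m := lt_min (by linarith) hδ
  have hmδ : m ≤ δ := min_le_right _ _
  have hmε : m < ε := lt_of_le_of_lt (min_le_left _ _) (by linarith)
  have hVδ : volume (thickening δ A) ≠ ∞ := hb.thickening.measure_lt_top.ne
  have contOn : ∀ a b : ℝ, 0 ≤ a → ContinuousOn (fun t : ℝ => t ^ (σ - N - 1)) (Ioc a b) :=
    fun a b ha t ht =>
      (Real.continuousAt_rpow_const t _ (Or.inl (ne_of_gt (lt_of_le_of_lt ha ht.1)))).continuousWithinAt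
  have hAESM : ∀ a b : ℝ, 0 ≤ a → AEStronglyMeasurable G (volume.restrict (Ioc a b)) :=
    fun a b ha => ((contOn a b ha).aestronglyMeasurable measurableSet_Ioc).mul
      volThick_meas.aestronglyMeasurable
  have h1 : IntegrableOn G (Ioc 0 m) volume := by
    have hint : IntegrableOn (fun t : ℝ => t ^ (σ - r - 1)) (Ioc 0 m) volume := by
      rw [← intervalIntegrable_iff_integrableOn_Ioc_of_le hm0.le]
      exact intervalIntegral.intervalIntegrable_rpow' (by linarith)
    refine hint.integrable.mono' (hAESM 0 m le_rfl) ?_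
    filter_upwards [ae_restrict_mem measurableSet_Ioc] with t ht
    have ht0 : 0 < t := ht.1
    have hVt : (volume (thickening t A)).toReal ≤ t ^ ((N:ℝ) - r) :=
      ENNReal.toReal_le_of_le_ofReal (Real.rpow_pos_of_pos ht0 _).le
        (hbound t ⟨ht0, lt_of_le_of_lt ht.2 hmε⟩)
    have hGnn : 0 ≤ G t :=
      mul_nonneg (Real.rpow_pos_of_pos ht0 _).le ENNReal.toReal_nonneg
    rw [Real.norm_of_nonneg hGnn]
    calc G t ≤ t ^ (σ - N - 1) * t ^ ((N:ℝ) - r) :=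
          mul_le_mul_of_nonneg_left hVt (Real.rpow_pos_of_pos ht0 _).le
      _ = t ^ (σ - r - 1) := by
          rw [← Real.rpow_add ht0]; congr 1; ring
  have h2 : IntegrableOn G (Ioc m δ) volume := by
    set C := (max (m ^ (σ - (N:ℝ) - 1)) (δ ^ (σ - (N:ℝ) - 1))) *
        (volume (thickening δ A)).toReal with hC
    have hint : IntegrableOn (fun _ : ℝ => C) (Ioc m δ) volume :=
      integrableOn_const measure_Ioc_lt_top.ne
    refine hint.integrable.mono' (hAESM m δ hm0.le) ?_
    filter_upwards [ae_restrict_mem measurableSet_Ioc] with t ht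
    have ht0 : 0 < t := lt_of_lt_of_le hm0 ht.1.le
    have hp1 : t ^ (σ - (N:ℝ) - 1) ≤ max (m ^ (σ - (N:ℝ) - 1)) (δ ^ (σ - (N:ℝ) - 1)) := by
      rcases le_or_gt 0 (σ - (N:ℝ) - 1) with he | he
      · exact le_max_of_le_right (Real.rpow_le_rpow ht0.le ht.2 he)
      · exact le_max_of_le_left (Real.rpow_le_rpow_of_nonpos hm0 ht.1.le he.le)
    have hp2 : (volume (thickening t A)).toReal ≤ (volume (thickening δ A)).toReal :=
      ENNReal.toReal_mono hVδ (measure_mono (thickening_mono ht.2 A))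
    have hGnn : 0 ≤ G t :=
      mul_nonneg (Real.rpow_pos_of_pos ht0 _).le ENNReal.toReal_nonneg
    rw [Real.norm_of_nonneg hGnn]
    exact mul_le_mul hp1 hp2 ENNReal.toReal_nonneg
      (le_trans (Real.rpow_pos_of_pos hm0 _).le (le_max_left _ _))
  have := h1.union h2
  rwa [Ioc_union_Ioc_eq_Ioc hm0.le hmδ] at this


lemma integrableOn_Gc (hb : Bornology.IsBounded A) {r ε δ : ℝ} {s : ℂ} (hδ : 0 < δ) (hε : 0 < ε)
    (hrσ : r < s.re)
    (hbound : ∀ t ∈ Ioo (0:ℝ) ε, volume (thickening t A) ≤ ENNReal.ofReal (t ^ ((N : ℝ) - r))) :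
    IntegrableOn
      (fun t : ℝ => (t : ℂ) ^ (s - (N : ℂ) - 1) * ((volume (thickening t A)).toReal : ℂ))
      (Ioc 0 δ) volume := by
  have hG := integrableOn_G (A := A) hb hδ hε hrσ hbound (σ := s.re)
  have hAESM : AEStronglyMeasurable
      (fun t : ℝ => (t : ℂ) ^ (s - (N:ℂ) - 1) * ((volume (thickening t A)).toReal : ℂ))
      (volume.restrict (Ioc 0 δ)) := by
    refine AEStronglyMeasurable.mul ?_
      ((Complex.measurable_ofReal.comp volThick_meas).aestronglyMeasurable)
    refine ContinuousOn.aestronglyMeasurable (fun t ht => ?_) measurableSet_Ioc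
    exact (Complex.continuousAt_ofReal_cpow_const t _ (Or.inr (ne_of_gt ht.1))).continuousWithinAt
  refine hG.integrable.mono' hAESM ?_
  filter_upwards [ae_restrict_mem measurableSet_Ioc] with t ht
  rw [norm_mul, Complex.norm_cpow_eq_rpow_re_of_pos ht.1,
    Complex.norm_real, Real.norm_of_nonneg ENNReal.toReal_nonneg]
  have : (s - (N:ℂ) - 1).re = s.re - (N:ℝ) - 1 := by
    simp [Complex.sub_re, Complex.natCast_re, Complex.one_re]
  rw [this]

end helpers

/-- for `Re s > dim̄_B A`, the tube zeta integral converges absolutely and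
`∫_{A_δ} d(x,A)^{s−N} dx = δ^{s−N}|A_δ| + (N−s) ∫_0^δ t^{s−N−1}|A_t| dt`. -/
theorem stmt4 (N : ℕ) (hN : 1 ≤ N) (A : Set (EuclideanSpace ℝ (Fin N)))
    (hA : A.Nonempty) (hb : Bornology.IsBounded A) (δ : ℝ) (hδ : 0 < δ) :
    ∀ s : ℂ, upperBoxDim N A < s.re →
      IntegrableOn
        (fun t : ℝ => (t : ℂ) ^ (s - (N : ℂ) - 1) * ((volume (thickening t A)).toReal : ℂ))
        (Ioc 0 δ) volume ∧
      ∫ x in thickening δ A, (Metric.infDist x A : ℂ) ^ (s - (N : ℂ)) =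
        (δ : ℂ) ^ (s - (N : ℂ)) * ((volume (thickening δ A)).toReal : ℂ) +
        ((N : ℂ) - s) *
          ∫ t in Ioc (0 : ℝ) δ,
            (t : ℂ) ^ (s - (N : ℂ) - 1) * ((volume (thickening t A)).toReal : ℂ) := by
  intro s hs
  obtain ⟨r, hr0, hrσ, hrM⟩ := exists_good_r hb hs
  obtain ⟨ε, hε, hbound⟩ := eventual_bound hrM
  have hInt := integrableOn_Gc hb hδ hε hrσ hbound
  refine ⟨hInt, ?_⟩
  have hAδmeas : MeasurableSet (thickening δ A) := isOpen_thickening.measurableSet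
  by_cases hsN : s = (N : ℂ)
  · subst hsN
    simp only [sub_self, Complex.cpow_zero, setIntegral_const, zero_mul, add_zero, one_mul,
      smul_eq_mul, mul_one, Complex.real_smul]
    rfl
  -- main case
  set c := s - (N : ℂ) with hc
  have hc0 : c ≠ 0 := sub_ne_zero.mpr hsN
  set μ := volume.restrict (thickening δ A) with hμ
  set ν := volume.restrict (Ioc (0:ℝ) δ) with hν
  set U : Set (EuclideanSpace ℝ (Fin N) × ℝ) := {q : EuclideanSpace ℝ (Fin N) × ℝ | infDist q.1 A < q.2} with hU
  set F : EuclideanSpace ℝ (Fin N) × ℝ → ℂ := fun q => U.indicator (fun q => ((q.2 : ℂ) ^ (c - 1))) q with hF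
  have hUopen : IsOpen U :=
    isOpen_lt (show Continuous fun q : EuclideanSpace ℝ (Fin N) × ℝ => infDist q.1 A from
      (continuous_infDist_pt A).comp continuous_fst) continuous_snd
  -- sections in x
  have hsec : ∀ t : ℝ, (fun x : EuclideanSpace ℝ (Fin N) => F (x, t)) =
      (thickening t A).indicator (fun _ => ((t : ℂ) ^ (c - 1))) := by
    intro t; ext x
    simp only [hF]
    by_cases hx : infDist x A < t
    · rw [Set.indicator_of_mem (by exact hx : (x, t) ∈ U),
        Set.indicator_of_mem ((mem_thickening_iff_infDist_lt hA).mpr hx)]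
    · rw [Set.indicator_of_notMem (by exact hx : (x, t) ∉ U),
        Set.indicator_of_notMem (fun hmem => hx ((mem_thickening_iff_infDist_lt hA).mp hmem))]
  -- sections in t
  have hsec' : ∀ x : EuclideanSpace ℝ (Fin N), (fun t : ℝ => F (x, t)) =
      (Ioi (infDist x A)).indicator (fun t : ℝ => ((t : ℂ) ^ (c - 1))) := by
    intro x; ext t
    simp only [hF]
    by_cases hx : infDist x A < t
    · rw [Set.indicator_of_mem (by exact hx : (x, t) ∈ U), Set.indicator_of_mem (mem_Ioi.mpr hx)]
    · rw [Set.indicator_of_notMem (by exact hx : (x, t) ∉ U),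
        Set.indicator_of_notMem (fun h => hx (mem_Ioi.mp h))]
  have hμthick : ∀ t ∈ Ioc (0:ℝ) δ, μ (thickening t A) = volume (thickening t A) := by
    intro t ht
    rw [hμ, Measure.restrict_apply isOpen_thickening.measurableSet,
      inter_eq_self_of_subset_left (thickening_mono ht.2 A)]
  -- measurability of F
  have hFm : AEStronglyMeasurable F (μ.prod ν) := by
    have hg : AEStronglyMeasurable (fun q : EuclideanSpace ℝ (Fin N) × ℝ => ((q.2 : ℂ) ^ (c - 1))) (μ.prod ν) := by
      rw [hμ, hν, Measure.prod_restrict]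
      refine ContinuousOn.aestronglyMeasurable (fun q hq => ?_)
        (hAδmeas.prod measurableSet_Ioc)
      exact ((Complex.continuousAt_ofReal_cpow_const q.2 _
        (Or.inr (ne_of_gt hq.2.1))).comp continuous_snd.continuousAt).continuousWithinAt
    exact hg.indicator hUopen.measurableSet
  have hVδ : volume (thickening δ A) < ∞ := hb.thickening.measure_lt_top
  haveI : IsFiniteMeasure μ := ⟨by rw [hμ, Measure.restrict_apply_univ]; exact hVδ⟩
  -- integrability of F on the product
  have hFint : Integrable F (μ.prod ν) := by
    rw [show F = fun q : EuclideanSpace ℝ (Fin N) × ℝ => F (q.1, q.2) from rfl] at hFm ⊢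
    refine (integrable_prod_iff' hFm).mpr ⟨?_, ?_⟩
    · filter_upwards [ae_restrict_mem measurableSet_Ioc] with t ht
      rw [hsec t, integrable_indicator_iff isOpen_thickening.measurableSet]
      refine integrableOn_const (ne_of_lt ?_)
      calc μ (thickening t A) = volume (thickening t A) := hμthick t ht
        _ ≤ volume (thickening δ A) := measure_mono (thickening_mono ht.2 A)
        _ < ∞ := hVδ
    · have hGr := integrableOn_G hb hδ hε hrσ hbound (σ := s.re)
      refine hGr.integrable.congr ?_
      filter_upwards [ae_restrict_mem measurableSet_Ioc] with t ht
      have hnorm : (fun x : EuclideanSpace ℝ (Fin N) => ‖F (x, t)‖) =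
          (thickening t A).indicator (fun _ => ‖(t : ℂ) ^ (c - 1)‖) := by
        ext x
        rw [show F (x, t) = (fun x : EuclideanSpace ℝ (Fin N) => F (x, t)) x from rfl, hsec t,
          norm_indicator_eq_indicator_norm]
      rw [hnorm, integral_indicator_const _ isOpen_thickening.measurableSet, measureReal_def, hμthick t ht,
        smul_eq_mul, Complex.norm_cpow_eq_rpow_re_of_pos ht.1]
      have : (c - 1).re = s.re - (N:ℝ) - 1 := by
        simp [hc, Complex.sub_re, Complex.natCast_re, Complex.one_re]
      rw [this, mul_comm]
  -- Fubini
  have hswap : ∫ x, (∫ t, F (x, t) ∂ν) ∂μ = ∫ t, (∫ x, F (x, t) ∂μ) ∂ν :=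
    integral_integral_swap hFint
  -- compute the t-side
  have hR : ∫ t, (∫ x, F (x, t) ∂μ) ∂ν =
      ∫ t in Ioc (0:ℝ) δ, ((t : ℂ) ^ (c - 1)) * ((volume (thickening t A)).toReal : ℂ) := by
    refine integral_congr_ae ?_
    filter_upwards [ae_restrict_mem measurableSet_Ioc] with t ht
    rw [show (∫ x, F (x, t) ∂μ) = ∫ x, (fun x : EuclideanSpace ℝ (Fin N) => F (x, t)) x ∂μ from rfl, hsec t,
      integral_indicator_const _ isOpen_thickening.measurableSet, measureReal_def, hμthick t ht,
      Complex.real_smul, mul_comm]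
  -- the x-side pointwise computation
  have hptwise : ∀ x : EuclideanSpace ℝ (Fin N), infDist x A < δ → (0 < c.re ∨ 0 < infDist x A) →
      (∫ t, F (x, t) ∂ν) = ((δ:ℂ) ^ c - ((infDist x A : ℝ) : ℂ) ^ c) / c := by
    intro x hdδ hcase
    have hd0 : 0 ≤ infDist x A := infDist_nonneg
    have hIocinter : Ioi (infDist x A) ∩ Ioc (0:ℝ) δ = Ioc (infDist x A) δ := by
      ext t
      constructor
      · rintro ⟨h1, _, h3⟩; exact ⟨h1, h3⟩
      · rintro ⟨h1, h2⟩; exact ⟨h1, lt_of_le_of_lt hd0 h1, h2⟩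
    rw [show (∫ t, F (x, t) ∂ν) = ∫ t, (fun t : ℝ => F (x, t)) t ∂ν from rfl, hsec' x, hν,
      integral_indicator measurableSet_Ioi, Measure.restrict_restrict measurableSet_Ioi,
      hIocinter, ← intervalIntegral.integral_of_le hdδ.le]
    have harg : -1 < (c - 1).re ∨ (c - 1 ≠ -1 ∧ (0:ℝ) ∉ Set.uIcc (infDist x A) δ) := by
      rcases hcase with h | h
      · left
        have : (c - 1).re = c.re - 1 := by simp
        rw [this]; linarith
      · right
        constructor
        · intro hcon
          apply hc0
          have := congrArg (· + 1) hcon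
          simpa using this
        · rw [Set.mem_uIcc]
          push_neg
          constructor
          · intro h1; linarith
          · intro h1; linarith
    rw [integral_cpow harg]
    have : c - 1 + 1 = c := by ring
    rw [this]
  -- the x-side a.e. computation
  have hL : ∀ᵐ x ∂μ, (∫ t, F (x, t) ∂ν) =
      ((δ:ℂ) ^ c - ((infDist x A : ℝ) : ℂ) ^ c) / c := by
    rcases le_or_gt s.re (N:ℝ) with hsre | hsre
    · -- closure A is null
      have hcnull : volume (closure A) = 0 := by
        have hev : ∀ᶠ t in 𝓝[>] (0:ℝ),
            volume (closure A) ≤ ENNReal.ofReal (t ^ ((N:ℝ) - r)) := by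
          filter_upwards [Ioo_mem_nhdsGT_of_mem (by constructor <;> simp [hε] :
            (0:ℝ) ∈ Ico (0:ℝ) ε)] with t ht
          exact le_trans (measure_mono (closure_subset_thickening ht.1 A)) (hbound t ht)
        have htend : Tendsto (fun t : ℝ => ENNReal.ofReal (t ^ ((N:ℝ) - r)))
            (𝓝[>] (0:ℝ)) (𝓝 0) := by
          have hNr : 0 < (N:ℝ) - r := by linarith
          have h1 : Tendsto (fun t : ℝ => t ^ ((N:ℝ) - r)) (𝓝 (0:ℝ)) (𝓝 (0:ℝ)) := by
            have := (Real.continuous_rpow_const hNr.le).tendsto 0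
            rwa [Real.zero_rpow hNr.ne'] at this
          have h2 : Tendsto (fun t : ℝ => t ^ ((N:ℝ) - r)) (𝓝[>] (0:ℝ)) (𝓝 (0:ℝ)) :=
            h1.mono_left nhdsWithin_le_nhds
          have := (ENNReal.continuous_ofReal.tendsto 0).comp h2
          rwa [ENNReal.ofReal_zero] at this
        exact le_antisymm (ge_of_tendsto htend hev) zero_le
      have hae1 : ∀ᵐ x ∂μ, x ∉ closure A :=
        ae_restrict_of_ae (measure_eq_zero_iff_ae_notMem.mp hcnull)
      filter_upwards [ae_restrict_mem hAδmeas, hae1] with x hx hx'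
      refine hptwise x ((mem_thickening_iff_infDist_lt hA).mp hx) (Or.inr ?_)
      refine lt_of_le_of_ne infDist_nonneg (Ne.symm ?_)
      exact fun h0 => hx' ((mem_closure_iff_infDist_zero hA).mpr h0)
    · filter_upwards [ae_restrict_mem hAδmeas] with x hx
      refine hptwise x ((mem_thickening_iff_infDist_lt hA).mp hx) (Or.inl ?_)
      simp [hc, Complex.sub_re, Complex.natCast_re]
      linarith
  -- integrability of the distance function
  have hFx : Integrable (fun x => ∫ t, F (x, t) ∂ν) μ := hFint.integral_prod_left
  have hg : Integrable (fun x => ((δ:ℂ) ^ c - ((infDist x A : ℝ) : ℂ) ^ c) / c) μ :=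
    hFx.congr hL
  have hdint : Integrable (fun x => ((infDist x A : ℝ) : ℂ) ^ c) μ := by
    have h1 : Integrable (fun x =>
        (δ:ℂ) ^ c - c * ((((δ:ℂ) ^ c - ((infDist x A : ℝ) : ℂ) ^ c)) / c)) μ :=
      (integrable_const _).sub (hg.const_mul c)
    refine h1.congr (Eventually.of_forall fun x => ?_)
    field_simp
    ring
  -- put everything together
  have hLHS : ∫ x, (∫ t, F (x, t) ∂ν) ∂μ =
      ((volume (thickening δ A)).toReal • (δ:ℂ) ^ c
        - ∫ x in thickening δ A, ((infDist x A : ℝ) : ℂ) ^ c) / c := by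
    rw [integral_congr_ae hL, integral_div, integral_sub (integrable_const _) hdint,
      integral_const, measureReal_def, hμ, Measure.restrict_apply_univ]
  rw [hLHS, hR] at hswap
  have hNs : (N:ℂ) - s = -c := by rw [hc]; ring
  rw [hNs]
  rw [Complex.real_smul] at hswap
  have h2 : ((volume (thickening δ A)).toReal : ℂ) * (δ:ℂ) ^ c -
      (∫ x in thickening δ A, ((infDist x A : ℝ) : ℂ) ^ c) =
      c * ∫ t in Ioc (0:ℝ) δ, ((t : ℂ) ^ (c - 1)) * ((volume (thickening t A)).toReal : ℂ) := by
    have := (div_eq_iff hc0).mp hswap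
    linear_combination this
  linear_combination -h2
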